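/- With the definitions below, for every v_2 ∈ V_2 one has (c_τ(v_2), c_τ(v_2))_{m_τ} = (τ²/2) a(d_τ(v_2) - b_τ(d_τ(v_2)), d_τ(v_2)). -/
import Mathlib


open RealInnerProductSpace

theorem stmt14 {V : Type*} [NormedAddCommGroup V] [InnerProductSpace ℝ V]
    [FiniteDimensional ℝ V]
    (a : V →ₗ[ℝ] V →ₗ[ℝ] ℝ) (hsymm : ∀ x y, a x y = a y x)
    (hpd : ∀ v : V, v ≠ 0 → 0 < a v v)
    (τ : ℝ) (hτ : 0 < τ)
    (V1 V2 : Submodule ℝ V) (b c d : V → V)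
    (hbmem : ∀ v1 ∈ V1, b v1 ∈ V1)
    (hb : ∀ v1 ∈ V1, ∀ v ∈ V1,
      ⟪b v1, v⟫ + (τ^2 / 2) * a (b v1) v = ⟪v1, v⟫)
    (hcmem : ∀ u ∈ V1 ⊔ V2, c u ∈ V1)
    (hc : ∀ u ∈ V1 ⊔ V2, ∀ v ∈ V1,
      ⟪c u, v⟫ + (τ^2 / 2) * a (c u) v = (τ^2 / 2) * a u v)
    (hdmem : ∀ u ∈ V1 ⊔ V2, d u ∈ V1)
    (hd : ∀ u ∈ V1 ⊔ V2, ∀ v ∈ V1, a (d u) v = a u v) :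
    ∀ v2 ∈ V2,
      ⟪c v2, c v2⟫ + (τ^2 / 2) * a (c v2) (c v2)
        = (τ^2 / 2) * a (d v2 - b (d v2)) (d v2) := by
  intro v2 hv2
  have hv2' : v2 ∈ V1 ⊔ V2 := Submodule.mem_sup_right hv2
  set x := d v2 with hxdef
  have hx : x ∈ V1 := hdmem v2 hv2'
  have hcv : c v2 ∈ V1 := hcmem v2 hv2'
  have hbx : b x ∈ V1 := hbmem x hx
  have key : ∀ v ∈ V1,
      ⟪c v2 - (x - b x), v⟫ + (τ^2/2) * a (c v2 - (x - b x)) v = 0 := by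
    intro v hv
    have h1 := hc v2 hv2' v hv
    have h2 := hb x hx v hv
    have h3 := hd v2 hv2' v hv
    simp only [inner_sub_left, map_sub, LinearMap.sub_apply]
    nlinarith [h1, h2, h3]
  have hw : c v2 - (x - b x) = 0 := by
    by_contra hne
    have hmem : c v2 - (x - b x) ∈ V1 :=
      Submodule.sub_mem _ hcv (Submodule.sub_mem _ hx hbx)
    have hk := key _ hmem
    have h1 : (0:ℝ) ≤ ⟪c v2 - (x - b x), c v2 - (x - b x)⟫ := real_inner_self_nonneg
    have h2 := hpd _ hne
    have h3 : 0 < τ^2/2 * a (c v2 - (x - b x)) (c v2 - (x - b x)) :=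
      mul_pos (by positivity) h2
    linarith
  have hceq : c v2 = x - b x := by rwa [sub_eq_zero] at hw
  have h1 := hc v2 hv2' (c v2) hcv
  have h3 := hd v2 hv2' (c v2) hcv
  calc (⟪c v2, c v2⟫ : ℝ) + (τ^2/2) * a (c v2) (c v2)
      = (τ^2/2) * a v2 (c v2) := h1
    _ = (τ^2/2) * a x (c v2) := by rw [h3]
    _ = (τ^2/2) * a (c v2) x := by rw [hsymm]
    _ = (τ^2/2) * a (x - b x) x := by rw [hceq]
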